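/- Let n, m, K : ℕ, let F belong to the unitary group of n×n complex matrices, let S : Fin m → Matrix (Fin n) (Fin n) ℂ be diagonal matrices with ∑ i, (S i)ᴴ * S i = 1, and let P : Fin K → Matrix (Fin n) (Fin n) ℂ be diagonal matrices whose diagonal entries all lie in {0, 1}. Let w : Fin K → ℝ satisfy w k ≥ 0 for all k and ∑ k, w k = 1, and assume the coverage condition: for every index j there exists k with w k > 0 and (P k) j j = 1. Then the weighted average ∑ k, (w k : ℂ) • (∑ i, (S i)ᴴ * Fᴴ * (P k) * F * (S i)) is positive definite (hence full rank). -/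

import Mathlib

open Matrix
open scoped BigOperators ComplexOrder

/-- **The conditional mean of the MRI forward operator is full rank.**
Let `F` be unitary, `S i` diagonal matrices with `∑ i, (S i)ᴴ * S i = 1`, and
`P k` diagonal matrices with diagonal entries in `{0, 1}`.  If `w k ≥ 0`, `∑ k, w k = 1`,
and every index `j` is covered (`∃ k, w k > 0 ∧ (P k) j j = 1`), then
`∑ k, w k • (∑ i, (S i)ᴴ * Fᴴ * (P k) * F * (S i))` is positive definite. -/
theorem mri_expected_forward_operator_posDef
    {n m K : ℕ} (F : Matrix.unitaryGroup (Fin n) ℂ)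
    (S : Fin m → Matrix (Fin n) (Fin n) ℂ)
    (hSdiag : ∀ i, (S i).IsDiag)
    (hSsum : ∑ i, (S i)ᴴ * S i = 1)
    (P : Fin K → Matrix (Fin n) (Fin n) ℂ)
    (hPdiag : ∀ k, (P k).IsDiag)
    (hP01 : ∀ k j, (P k) j j = 0 ∨ (P k) j j = 1)
    (w : Fin K → ℝ) (hw : ∀ k, w k ≥ 0) (hwsum : ∑ k, w k = 1)
    (hcover : ∀ j, ∃ k, w k > 0 ∧ (P k) j j = 1) :
    (∑ k, (w k : ℂ) •
        (∑ i, (S i)ᴴ * (F : Matrix (Fin n) (Fin n) ℂ)ᴴ * P k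
            * (F : Matrix (Fin n) (Fin n) ℂ) * S i)).PosDef := by
  classical
  set Fm : Matrix (Fin n) (Fin n) ℂ := (F : Matrix (Fin n) (Fin n) ℂ) with hFmdef
  -- each P k is self-adjoint
  have hPherm : ∀ k, (P k)ᴴ = P k := by
    intro k
    ext j l
    rw [conjTranspose_apply]
    by_cases hjl : l = j
    · subst hjl
      rcases hP01 k l with h | h <;> simp [h]
    · rw [hPdiag k hjl, hPdiag k (fun hh => hjl hh.symm), star_zero]
  have hFF : Fmᴴ * Fm = 1 := by
    have := F.2
    rw [Matrix.mem_unitaryGroup_iff'] at this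
    simpa [star_eq_conjTranspose] using this
  have hsum : ∀ {ι : Type} (s : Finset ι) (A : ι → Matrix (Fin n) (Fin n) ℂ)
      (x : Fin n → ℂ), (∑ a ∈ s, A a) *ᵥ x = ∑ a ∈ s, A a *ᵥ x :=
    fun s A x => map_sum (mulVec.addMonoidHomLeft x) A s
  have hdot : ∀ {ι : Type} (s : Finset ι) (f : ι → (Fin n → ℂ)) (v : Fin n → ℂ),
      v ⬝ᵥ (∑ a ∈ s, f a) = ∑ a ∈ s, v ⬝ᵥ f a := by
    intro ι s f v
    simp only [dotProduct, Finset.sum_apply, Finset.mul_sum]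
    exact Finset.sum_comm
  rw [Matrix.posDef_iff_dotProduct_mulVec]
  constructor
  · -- Hermitian
    show _ᴴ = _
    rw [conjTranspose_sum]
    refine Finset.sum_congr rfl fun k _ => ?_
    rw [conjTranspose_smul]
    congr 1
    · simp [Complex.star_def, Complex.conj_ofReal]
    rw [conjTranspose_sum]
    refine Finset.sum_congr rfl fun i _ => ?_
    simp [Matrix.conjTranspose_mul, hPherm, Matrix.mul_assoc]
  · intro x hx
    -- the transformed vectors
    set y : Fin m → (Fin n → ℂ) := fun i => Fm *ᵥ (S i *ᵥ x) with hy
    -- quadratic form of each summand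
    have key : ∀ k i, star x ⬝ᵥ (((S i)ᴴ * Fmᴴ * P k * Fm * S i) *ᵥ x)
        = ∑ j, P k j j * (Complex.normSq (y i j) : ℂ) := by
      intro k i
      have hM : (S i)ᴴ * Fmᴴ * P k * Fm * S i = (Fm * S i)ᴴ * P k * (Fm * S i) := by
        simp [Matrix.conjTranspose_mul, Matrix.mul_assoc]
      have hyi : y i = (Fm * S i) *ᵥ x := by rw [hy]; simp [mulVec_mulVec]
      rw [hM, ← mulVec_mulVec, ← mulVec_mulVec, dotProduct_mulVec, ← star_mulVec,
        ← hyi, ← (hPdiag k).diagonal_diag]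
      simp only [mulVec_diagonal, dotProduct, Pi.star_apply, Matrix.diag]
      refine Finset.sum_congr rfl fun j _ => ?_
      rw [Complex.normSq_eq_conj_mul_self]
      ring_nf
      simp [Complex.star_def]
      ring
    -- rewrite the full quadratic form
    have hform : star x ⬝ᵥ ((∑ k, (w k : ℂ) •
        (∑ i, (S i)ᴴ * Fmᴴ * P k * Fm * S i)) *ᵥ x)
        = ∑ k, (w k : ℂ) * ∑ i, ∑ j, P k j j * (Complex.normSq (y i j) : ℂ) := by
      rw [hsum, hdot]
      refine Finset.sum_congr rfl fun k _ => ?_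
      rw [smul_mulVec, dotProduct_smul, smul_eq_mul]
      congr 1
      rw [hsum, hdot]
      exact Finset.sum_congr rfl fun i _ => key k i
    rw [hform]
    -- positivity
    have hterm_nonneg : ∀ k i j, (0:ℂ) ≤ P k j j * (Complex.normSq (y i j) : ℂ) := by
      intro k i j
      rcases hP01 k j with h | h <;> rw [h]
      · simp
      · rw [one_mul]
        exact_mod_cast Complex.zero_le_real.mpr (Complex.normSq_nonneg _)
    have hq_nonneg : ∀ k, (0:ℂ) ≤ ∑ i, ∑ j, P k j j * (Complex.normSq (y i j) : ℂ) :=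
      fun k => Finset.sum_nonneg fun i _ => Finset.sum_nonneg fun j _ => hterm_nonneg k i j
    -- find a nonzero y i
    have hex : ∃ i, S i *ᵥ x ≠ 0 := by
      by_contra h
      push_neg at h
      apply hx
      have h1 : (1 : Matrix (Fin n) (Fin n) ℂ) *ᵥ x = 0 := by
        rw [← hSsum, hsum]
        refine Finset.sum_eq_zero fun i _ => ?_
        rw [← mulVec_mulVec, h i, mulVec_zero]
      simpa using h1
    obtain ⟨i₀, hi₀⟩ := hex
    have hyne : y i₀ ≠ 0 := by
      intro h0
      apply hi₀
      have : Fmᴴ *ᵥ (y i₀) = S i₀ *ᵥ x := by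
        show Fmᴴ *ᵥ (Fm *ᵥ (S i₀ *ᵥ x)) = S i₀ *ᵥ x
        simp only [mulVec_mulVec]
        rw [← Matrix.mul_assoc, hFF, Matrix.one_mul]
      rw [← this, h0, mulVec_zero]
    obtain ⟨j₀, hj₀⟩ := Function.ne_iff.mp hyne
    obtain ⟨k₀, hwk₀, hPk₀⟩ := hcover j₀
    refine Finset.sum_pos' (fun k _ => mul_nonneg ?_ (hq_nonneg k)) ⟨k₀, Finset.mem_univ _, ?_⟩
    · exact_mod_cast Complex.zero_le_real.mpr (hw k)
    · refine mul_pos ?_ ?_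
      · exact_mod_cast Complex.zero_lt_real.mpr hwk₀
      · refine Finset.sum_pos' (fun i _ => Finset.sum_nonneg fun j _ => hterm_nonneg k₀ i j)
          ⟨i₀, Finset.mem_univ _, ?_⟩
        refine Finset.sum_pos' (fun j _ => hterm_nonneg k₀ i₀ j) ⟨j₀, Finset.mem_univ _, ?_⟩
        rw [hPk₀, one_mul]
        exact_mod_cast Complex.zero_lt_real.mpr (Complex.normSq_pos.mpr (by simpa using hj₀))
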